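/- arXiv:1811.00500 — 7 statements merged into one kernel-verified Lean document; each statement's English description precedes it below -/
import Mathlib

section
/- Let A be a complex unital *-algebra, B a unital star-subalgebra of A, and N, D unital star-subalgebras of A with N ⊆ D. Assume the products {bd : b ∈ B, d ∈ D} linearly span B∨D. Let E : D → A be a completely positive linear map with E(d*) = E(d)* for all d ∈ D, E(1) = 1, and E(D) ⊆ B' ∩ N. Let Ẽ : B∨D → A be a linear map satisfying Ẽ(bd) = bE(d) = Ẽ(db) for all b ∈ B, d ∈ D. Then Ẽ is a normalized Markov quasi-conditional expectation with respect to the triplet B ⊆ B∨(B'∩N) ⊆ B∨D; explicitly: (i) Ẽ(1) = 1; (ii) Ẽ(x*) = Ẽ(x)* for all x ∈ B∨D; (iii) Ẽ(bx) = bẼ(x) for all b ∈ B and x ∈ B∨D; (iv) the range of Ẽ is contained in B∨(B'∩N) and Ẽ(D) ⊆ B'∩N; (v) for every m ∈ ℕ, all a_1,…,a_m ∈ B∨(B'∩N) and all y_1,…,y_m ∈ B∨D, the element Σ_{i,j} a_i Ẽ(y_i y_j*) a_j* is positive in A. -/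
open Matrix

/-- An element of a `*`-algebra is *positive* if it is a finite sum of elements of the
form `star y * y`. -/
def IsPosElem {A : Type*} [Ring A] [StarRing A] (a : A) : Prop :=
  a ∈ AddSubmonoid.closure {x : A | ∃ y : A, x = star y * y}

/-- A matrix over a `*`-algebra is *positive* if it is a finite sum of matrices of the
form `Cᴴ * C`. -/
def MatIsPos {A : Type*} [Ring A] [StarRing A] {k : ℕ}
    (X : Matrix (Fin k) (Fin k) A) : Prop :=
  X ∈ AddSubmonoid.closure
    {Y : Matrix (Fin k) (Fin k) A | ∃ C : Matrix (Fin k) (Fin k) A, Y = Cᴴ * C}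

/-- The commutant of a subset `S` of an algebra. -/
def Commutant {A : Type*} [Mul A] (S : Set A) : Set A := {a : A | ∀ s ∈ S, a * s = s * a}

lemma keymat {A : Type*} [Ring A] [StarRing A] {k : ℕ}
    (M : Matrix (Fin k) (Fin k) A) (hM : MatIsPos M) (v : Fin k → A) :
    IsPosElem (∑ i, ∑ j, v i * M i j * star (v j)) := by
  induction hM using AddSubmonoid.closure_induction with
  | mem X hX =>
    obtain ⟨C, rfl⟩ := hX
    have key : ∑ i, ∑ j, v i * (Cᴴ * C) i j * star (v j)
        = ∑ K, star (∑ j, C K j * star (v j)) * (∑ j, C K j * star (v j)) := by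
      have h1 : ∀ i j, v i * (Cᴴ * C) i j * star (v j)
          = ∑ K, (v i * star (C K i)) * (C K j * star (v j)) := by
        intro i j
        rw [Matrix.mul_apply, Finset.mul_sum, Finset.sum_mul]
        refine Finset.sum_congr rfl fun K _ => ?_
        simp [Matrix.conjTranspose_apply, mul_assoc]
      simp only [h1]
      rw [Finset.sum_congr rfl fun i _ => Finset.sum_comm, Finset.sum_comm]
      refine Finset.sum_congr rfl fun K _ => ?_
      rw [← Finset.sum_mul_sum]
      congr 1
      rw [star_sum]
      refine Finset.sum_congr rfl fun i _ => ?_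
      simp
    rw [key]
    exact AddSubmonoid.sum_mem _ fun K _ => AddSubmonoid.subset_closure ⟨_, rfl⟩
  | zero => simp; exact (AddSubmonoid.closure _).zero_mem
  | add X Y hX hY ihX ihY =>
    have : ∑ i, ∑ j, v i * (X + Y) i j * star (v j)
        = (∑ i, ∑ j, v i * X i j * star (v j)) + ∑ i, ∑ j, v i * Y i j * star (v j) := by
      rw [← Finset.sum_add_distrib]
      refine Finset.sum_congr rfl fun i _ => ?_
      rw [← Finset.sum_add_distrib]
      refine Finset.sum_congr rfl fun j _ => ?_
      simp [Matrix.add_apply, mul_add, add_mul]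
    rw [this]
    exact (AddSubmonoid.closure _).add_mem ihX ihY

lemma rearrange {A : Type*} [Ring A] (b1 p b2 x c2 q c1 : A)
    (h1 : p * b2 = b2 * p) (h2 : c2 * q = q * c2) :
    b1 * p * (b2 * x * c2) * (q * c1) = b1 * b2 * p * x * (q * c2 * c1) := by
  calc b1 * p * (b2 * x * c2) * (q * c1)
      = b1 * ((p * b2) * (x * (c2 * q))) * c1 := by noncomm_ring
    _ = b1 * ((b2 * p) * (x * (q * c2))) * c1 := by rw [h1, h2]
    _ = b1 * b2 * p * x * (q * c2 * c1) := by noncomm_ring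


lemma smul3 {A : Type*} [Ring A] [Algebra ℂ A] (c1 c2 c3 : ℂ) (x y z : A) :
    (c1 • x) * (c2 • y) * (c3 • z) = (c1 * (c2 * c3)) • (x * y * z) := by
  simp only [smul_mul_assoc, mul_smul_comm, smul_smul]
  congr 1
  ring

lemma smul2 {A : Type*} [Ring A] [Algebra ℂ A] (c1 c3 : ℂ) (x y z : A) :
    (c1 • x) * y * (c3 • z) = (c1 * c3) • (x * y * z) := by
  simp only [smul_mul_assoc, mul_smul_comm, smul_smul]
  congr 1
  ring

/-- If `E : D → A` is a completely positive, star-preserving, unital map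
with range in `B' ∩ N` and `Ẽ : B ∨ D → A` is a linear map with `Ẽ(bd) = b E(d) = Ẽ(db)`,
then `Ẽ` is a normalized Markov quasi-conditional expectation with respect to the triplet
`B ⊆ B ∨ (B' ∩ N) ⊆ B ∨ D`. -/
theorem stmt0 {A : Type*} [Ring A] [Algebra ℂ A] [StarRing A] [StarModule ℂ A]
    (B N D : StarSubalgebra ℂ A) (hND : N ≤ D)
    (hspan : ∀ x ∈ B ⊔ D,
      x ∈ Submodule.span ℂ {z : A | ∃ b ∈ B, ∃ d ∈ D, z = b * d})
    (E : A →ₗ[ℂ] A)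
    (hECP : ∀ (k : ℕ) (d : Fin k → A), (∀ i, d i ∈ D) →
      MatIsPos (Matrix.of fun i j => E (star (d i) * d j)))
    (hEstar : ∀ d ∈ D, E (star d) = star (E d))
    (hE1 : E 1 = 1)
    (hErange : ∀ d ∈ D, E d ∈ Commutant (B : Set A) ∩ (N : Set A))
    (Etil : A →ₗ[ℂ] A)
    (hEtil : ∀ b ∈ B, ∀ d ∈ D, Etil (b * d) = b * E d ∧ Etil (d * b) = b * E d) :
    -- (i) `Ẽ` is normalized
    Etil 1 = 1
    -- (ii) `Ẽ` is a `*`-map on `B ∨ D`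
    ∧ (∀ x ∈ B ⊔ D, Etil (star x) = star (Etil x))
    -- (iii) `Ẽ` is a `B`-module map
    ∧ (∀ b ∈ B, ∀ x ∈ B ⊔ D, Etil (b * x) = b * Etil x)
    -- (iv) range conditions: `Ẽ(B ∨ D) ⊆ B ∨ (B' ∩ N)` and `Ẽ(D) ⊆ B' ∩ N`
    ∧ (∀ x ∈ B ⊔ D,
        Etil x ∈ StarAlgebra.adjoin ℂ ((B : Set A) ∪ (Commutant (B : Set A) ∩ (N : Set A))))
    ∧ (∀ d ∈ D, Etil d ∈ Commutant (B : Set A) ∩ (N : Set A))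
    -- (v) complete positivity relative to `B ∨ (B' ∩ N)`
    ∧ (∀ (m : ℕ) (a y : Fin m → A),
        (∀ i, a i ∈
          StarAlgebra.adjoin ℂ ((B : Set A) ∪ (Commutant (B : Set A) ∩ (N : Set A)))) →
        (∀ i, y i ∈ B ⊔ D) →
        IsPosElem (∑ i, ∑ j, a i * Etil (y i * star (y j)) * star (a j))) := by
  classical
  set P : Set A := Commutant (B : Set A) ∩ (N : Set A) with hPdef
  set Sy : Set A := {z : A | ∃ b ∈ B, ∃ d ∈ D, z = b * d} with hSydef
  -- basic facts about P
  have hPone : (1 : A) ∈ P := ⟨fun s _ => by rw [one_mul, mul_one], N.one_mem⟩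
  have hPstar : ∀ p ∈ P, star p ∈ P := by
    rintro p ⟨hpc, hpN⟩
    refine ⟨fun s hs => ?_, star_mem hpN⟩
    have := hpc (star s) (star_mem hs)
    calc star p * s = star (star s * p) := by simp
      _ = star (p * star s) := by rw [← this]
      _ = s * star p := by simp
  have hPmul : ∀ p ∈ P, ∀ q ∈ P, p * q ∈ P := by
    rintro p ⟨hpc, hpN⟩ q ⟨hqc, hqN⟩
    refine ⟨fun s hs => ?_, mul_mem hpN hqN⟩
    rw [mul_assoc, hqc s hs, ← mul_assoc, hpc s hs, mul_assoc]
  -- Etil restricted to D is E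
  have hED : ∀ d ∈ D, Etil d = E d := by
    intro d hd
    have := (hEtil 1 B.one_mem d hd).1
    simpa using this
  have h1 : Etil 1 = 1 := by rw [hED 1 D.one_mem, hE1]
  -- membership of generators
  have hSy_mem : ∀ b ∈ B, ∀ d ∈ D, b * d ∈ Submodule.span ℂ Sy := fun b hb d hd =>
    Submodule.subset_span ⟨b, hb, d, hd, rfl⟩
  -- left module property
  have hEl : ∀ b ∈ B, ∀ x ∈ Submodule.span ℂ Sy, Etil (b * x) = b * Etil x := by
    intro b hb x hx
    induction hx using Submodule.span_induction with
    | mem z hz =>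
      obtain ⟨b', hb', d, hd, rfl⟩ := hz
      rw [← mul_assoc, (hEtil (b * b') (mul_mem hb hb') d hd).1,
        (hEtil b' hb' d hd).1, mul_assoc]
    | zero => simp
    | add u w hu hw ihu ihw => rw [mul_add, map_add, map_add, ihu, ihw, mul_add]
    | smul c u hu ihu => rw [mul_smul_comm, _root_.map_smul, _root_.map_smul, ihu, mul_smul_comm]
  -- right module property
  have hEr : ∀ b ∈ B, ∀ x ∈ Submodule.span ℂ Sy, Etil (x * b) = Etil x * b := by
    intro b hb x hx
    induction hx using Submodule.span_induction with
    | mem z hz =>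
      obtain ⟨b', hb', d, hd, rfl⟩ := hz
      have hdb : d * b ∈ Submodule.span ℂ Sy :=
        hspan _ (mul_mem ((le_sup_right : D ≤ B ⊔ D) hd) ((le_sup_left : B ≤ B ⊔ D) hb))
      calc Etil (b' * d * b) = Etil (b' * (d * b)) := by rw [mul_assoc]
        _ = b' * Etil (d * b) := hEl b' hb' _ hdb
        _ = b' * (b * E d) := by rw [(hEtil b hb d hd).2]
        _ = b' * (E d * b) := by rw [(hErange d hd).1 b hb]
        _ = Etil (b' * d) * b := by rw [(hEtil b' hb' d hd).1, mul_assoc]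
    | zero => simp
    | add u w hu hw ihu ihw => rw [add_mul, map_add, map_add, ihu, ihw, add_mul]
    | smul c u hu ihu => rw [smul_mul_assoc, _root_.map_smul, _root_.map_smul, ihu, smul_mul_assoc]
  have hbdb : ∀ b ∈ B, ∀ d ∈ D, ∀ b' ∈ B, Etil (b * d * b') = b * E d * b' := by
    intro b hb d hd b' hb'
    rw [hEr b' hb' _ (hSy_mem b hb d hd), (hEtil b hb d hd).1]
  -- star property on the span
  have hstar : ∀ x ∈ Submodule.span ℂ Sy, Etil (star x) = star (Etil x) := by
    intro x hx
    induction hx using Submodule.span_induction with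
    | mem z hz =>
      obtain ⟨b, hb, d, hd, rfl⟩ := hz
      rw [StarMul.star_mul, (hEtil (star b) (star_mem hb) (star d) (star_mem hd)).2,
        (hEtil b hb d hd).1, StarMul.star_mul, ← hEstar d hd]
      exact ((hErange (star d) (star_mem hd)).1 (star b) (star_mem hb)).symm
    | zero => simp
    | add u w hu hw ihu ihw => rw [star_add, map_add, map_add, ihu, ihw, star_add]
    | smul c u hu ihu => rw [star_smul, _root_.map_smul, _root_.map_smul, ihu, star_smul]
  -- range property on the span
  have hrange : ∀ x ∈ Submodule.span ℂ Sy,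
      Etil x ∈ StarAlgebra.adjoin ℂ ((B : Set A) ∪ P) := by
    intro x hx
    induction hx using Submodule.span_induction with
    | mem z hz =>
      obtain ⟨b, hb, d, hd, rfl⟩ := hz
      rw [(hEtil b hb d hd).1]
      exact mul_mem (StarAlgebra.subset_adjoin ℂ _ (Or.inl hb))
        (StarAlgebra.subset_adjoin ℂ _ (Or.inr (hErange d hd)))
    | zero => simp
    | add u w hu hw ihu ihw => rw [map_add]; exact add_mem ihu ihw
    | smul c u hu ihu => rw [_root_.map_smul]; exact SMulMemClass.smul_mem c ihu
  -- adjoin (B ∪ P) is contained in the span of products b * p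
  set Sa : Set A := {z : A | ∃ b ∈ B, ∃ p ∈ P, z = b * p} with hSadef
  have hSamul : ∀ x ∈ Submodule.span ℂ Sa, ∀ y ∈ Submodule.span ℂ Sa,
      x * y ∈ Submodule.span ℂ Sa := by
    intro x hx
    induction hx using Submodule.span_induction with
    | mem z hz =>
      intro y hy
      induction hy using Submodule.span_induction with
      | mem w hw =>
        obtain ⟨b, hb, p, hp, rfl⟩ := hz
        obtain ⟨b', hb', p', hp', rfl⟩ := hw
        have : b * p * (b' * p') = (b * b') * (p * p') := by
          have h := hp.1 b' hb'
          calc b * p * (b' * p') = b * (p * b') * p' := by noncomm_ring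
            _ = b * (b' * p) * p' := by rw [h]
            _ = (b * b') * (p * p') := by noncomm_ring
        rw [this]
        exact Submodule.subset_span ⟨b * b', mul_mem hb hb', p * p', hPmul p hp p' hp', rfl⟩
      | zero => rw [mul_zero]; exact zero_mem _
      | add u w hu hw ihu ihw => rw [mul_add]; exact add_mem ihu ihw
      | smul c u hu ihu => rw [mul_smul_comm]; exact Submodule.smul_mem _ c ihu
    | zero => intro y hy; rw [zero_mul]; exact zero_mem _
    | add u w hu hw ihu ihw =>
      intro y hy; rw [add_mul]; exact add_mem (ihu y hy) (ihw y hy)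
    | smul c u hu ihu =>
      intro y hy; rw [smul_mul_assoc]; exact Submodule.smul_mem _ c (ihu y hy)
  have hSastar : ∀ x ∈ Submodule.span ℂ Sa, star x ∈ Submodule.span ℂ Sa := by
    intro x hx
    induction hx using Submodule.span_induction with
    | mem z hz =>
      obtain ⟨b, hb, p, hp, rfl⟩ := hz
      rw [StarMul.star_mul, (hPstar p hp).1 (star b) (star_mem hb)]
      exact Submodule.subset_span ⟨star b, star_mem hb, star p, hPstar p hp, rfl⟩
    | zero => simp
    | add u w hu hw ihu ihw => rw [star_add]; exact add_mem ihu ihw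
    | smul c u hu ihu => rw [star_smul]; exact Submodule.smul_mem _ _ ihu
  have hone_Sa : (1 : A) ∈ Sa := ⟨1, B.one_mem, 1, hPone, (one_mul 1).symm⟩
  have hadj : ∀ a ∈ StarAlgebra.adjoin ℂ ((B : Set A) ∪ P),
      a ∈ Submodule.span ℂ Sa := by
    intro a ha
    induction ha using StarAlgebra.adjoin_induction with
    | mem z hz =>
      rcases hz with hz | hz
      · exact Submodule.subset_span ⟨z, hz, 1, hPone, (mul_one z).symm⟩
      · exact Submodule.subset_span ⟨1, B.one_mem, z, hz, (one_mul z).symm⟩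
    | algebraMap r =>
      rw [Algebra.algebraMap_eq_smul_one]
      exact Submodule.smul_mem _ _ (Submodule.subset_span hone_Sa)
    | add u w hu hw ihu ihw => exact add_mem ihu ihw
    | mul u w hu hw ihu ihw => exact hSamul u ihu w ihw
    | star u hu ihu => exact hSastar u ihu
  refine ⟨h1, fun x hx => hstar x (hspan x hx), fun b hb x hx => hEl b hb x (hspan x hx),
    fun x hx => hrange x (hspan x hx), fun d hd => hED d hd ▸ hErange d hd, ?_⟩
  -- part (v)
  intro m a y ha hy
  choose na ca za hza using fun i => Submodule.mem_span_set'.1 (hadj _ (ha i))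
  choose ny cy zy hzy using fun i => Submodule.mem_span_set'.1 (hspan _ (hy i))
  have hSa' : ∀ (i : Fin m) (k : Fin (na i)),
      ∃ b ∈ B, ∃ p ∈ P, (za i k : A) = b * p := fun i k => (za i k).2
  have hSy' : ∀ (i : Fin m) (k : Fin (ny i)),
      ∃ b ∈ B, ∃ d ∈ D, (zy i k : A) = b * d := fun i k => (zy i k).2
  choose ba hba pa hpa hzaeq using hSa'
  choose bb hbb dd hdd hzyeq using hSy'
  have ha' : ∀ i, a i = ∑ k, ca i k • (ba i k * pa i k) := by
    intro i
    rw [← hza i]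
    exact Finset.sum_congr rfl fun k _ => by rw [hzaeq i k]
  have hy' : ∀ i, y i = ∑ k, cy i k • (bb i k * dd i k) := by
    intro i
    rw [← hzy i]
    exact Finset.sum_congr rfl fun k _ => by rw [hzyeq i k]
  -- the expansion of Etil (y i * star (y j))
  have yEtil : ∀ i j, Etil (y i * star (y j)) =
      ∑ α, ∑ β, (cy i α * star (cy j β)) •
        (bb i α * E (dd i α * star (dd j β)) * star (bb j β)) := by
    intro i j
    have key : ∀ α β, Etil ((bb i α * dd i α) * star (bb j β * dd j β))
        = bb i α * E (dd i α * star (dd j β)) * star (bb j β) := by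
      intro α β
      rw [StarMul.star_mul]
      have h2 : bb i α * dd i α * (star (dd j β) * star (bb j β))
          = bb i α * (dd i α * star (dd j β)) * star (bb j β) := by noncomm_ring
      rw [h2]
      exact hbdb _ (hbb i α) _ (mul_mem (hdd i α) (star_mem (hdd j β))) _
        (star_mem (hbb j β))
    calc Etil (y i * star (y j))
        = Etil (∑ α, ∑ β, (cy i α * star (cy j β)) •
            ((bb i α * dd i α) * star (bb j β * dd j β))) := by
          rw [hy' i, hy' j, star_sum, Finset.sum_mul_sum]
          congr 1
          refine Finset.sum_congr rfl fun α _ => Finset.sum_congr rfl fun β _ => ?_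
          rw [star_smul, smul_mul_assoc, mul_smul_comm, smul_smul]
      _ = ∑ α, ∑ β, (cy i α * star (cy j β)) •
            Etil ((bb i α * dd i α) * star (bb j β * dd j β)) := by
          rw [map_sum]
          exact Finset.sum_congr rfl fun α _ => by
            rw [map_sum]
            exact Finset.sum_congr rfl fun β _ => by rw [_root_.map_smul]
      _ = ∑ α, ∑ β, (cy i α * star (cy j β)) •
            (bb i α * E (dd i α * star (dd j β)) * star (bb j β)) := by
          refine Finset.sum_congr rfl fun α _ => Finset.sum_congr rfl fun β _ => ?_
          rw [key α β]
  -- the combined families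
  let w : ∀ i : Fin m, Fin (na i) → Fin (ny i) → A :=
    fun i k α => (ca i k * cy i α) • (ba i k * bb i α * pa i k)
  -- term-by-term expansion
  have perterm : ∀ i j, ∀ (k : Fin (na i)) (α : Fin (ny i)) (l : Fin (na j)) (β : Fin (ny j)),
      (ca i k • (ba i k * pa i k)) * ((cy i α * star (cy j β)) •
          (bb i α * E (dd i α * star (dd j β)) * star (bb j β))) *
        star (ca j l • (ba j l * pa j l))
      = w i k α * E (dd i α * star (dd j β)) * star (w j l β) := by
    intro i j k α l β
    rw [star_smul, StarMul.star_mul, smul3]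
    show _ = (ca i k * cy i α) • (ba i k * bb i α * pa i k) *
        (E (dd i α * star (dd j β))) * star ((ca j l * cy j β) • (ba j l * bb j β * pa j l))
    rw [star_smul, smul2]
    rw [rearrange (ba i k) (pa i k) (bb i α) (E (dd i α * star (dd j β)))
      (star (bb j β)) (star (pa j l)) (star (ba j l))
      ((hpa i k).1 (bb i α) (hbb i α))
      (((hPstar _ (hpa j l)).1 (star (bb j β)) (star_mem (hbb j β))).symm)]
    congr 1
    · simp only [star_mul']
      ring
    · rw [StarMul.star_mul, StarMul.star_mul]
      noncomm_ring
  have hterm : ∀ i j, a i * Etil (y i * star (y j)) * star (a j)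
      = ∑ k, ∑ α, ∑ l, ∑ β,
          w i k α * E (dd i α * star (dd j β)) * star (w j l β) := by
    intro i j
    conv_lhs => rw [ha' i, yEtil i j, ha' j]
    rw [star_sum]
    simp only [Finset.sum_mul, Finset.mul_sum]
    let T : Fin (na i) → Fin (ny i) → Fin (na j) → Fin (ny j) → A := fun k α l β =>
      ca i k • (ba i k * pa i k) *
          (cy i α * star (cy j β)) • (bb i α * E (dd i α * star (dd j β)) * star (bb j β)) *
        star (ca j l • (ba j l * pa j l))
    show ∑ l, ∑ α, ∑ β, ∑ k, T k α l β = _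
    calc ∑ l, ∑ α, ∑ β, ∑ k, T k α l β
        = ∑ l, ∑ α, ∑ k, ∑ β, T k α l β :=
          Finset.sum_congr rfl fun l _ => Finset.sum_congr rfl fun α _ => Finset.sum_comm
      _ = ∑ l, ∑ k, ∑ α, ∑ β, T k α l β :=
          Finset.sum_congr rfl fun l _ => Finset.sum_comm
      _ = ∑ k, ∑ l, ∑ α, ∑ β, T k α l β := Finset.sum_comm
      _ = ∑ k, ∑ α, ∑ l, ∑ β, T k α l β :=
          Finset.sum_congr rfl fun k _ => Finset.sum_comm
      _ = ∑ k, ∑ α, ∑ l, ∑ β, w i k α * E (dd i α * star (dd j β)) * star (w j l β) :=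
          Finset.sum_congr rfl fun k _ => Finset.sum_congr rfl fun α _ =>
            Finset.sum_congr rfl fun l _ => Finset.sum_congr rfl fun β _ =>
              perterm i j k α l β
  let ι := (i : Fin m) × (Fin (na i) × Fin (ny i))
  let vf : ι → A := fun I => w I.1 I.2.1 I.2.2
  let df : ι → A := fun I => dd I.1 I.2.2
  have main : (∑ i, ∑ j, a i * Etil (y i * star (y j)) * star (a j))
      = ∑ I : ι, ∑ J : ι, vf I * E (df I * star (df J)) * star (vf J) := by
    simp only [← Finset.univ_sigma_univ, Finset.sum_sigma, Fintype.sum_prod_type, vf, df, ι]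
    refine Finset.sum_congr rfl fun i _ => ?_
    calc ∑ j, a i * Etil (y i * star (y j)) * star (a j)
        = ∑ j, ∑ k, ∑ α, ∑ l, ∑ β, w i k α * E (dd i α * star (dd j β)) * star (w j l β) :=
          Finset.sum_congr rfl fun j _ => hterm i j
      _ = ∑ k, ∑ j, ∑ α, ∑ l, ∑ β, w i k α * E (dd i α * star (dd j β)) * star (w j l β) :=
          Finset.sum_comm
      _ = ∑ k, ∑ α, ∑ j, ∑ l, ∑ β, w i k α * E (dd i α * star (dd j β)) * star (w j l β) :=
          Finset.sum_congr rfl fun k _ => Finset.sum_comm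
  rw [main]
  set n := Fintype.card ι with hn
  let e : Fin n ≃ ι := (Fintype.equivFin ι).symm
  have htrans : (∑ I : ι, ∑ J : ι, vf I * E (df I * star (df J)) * star (vf J))
      = ∑ i : Fin n, ∑ j : Fin n,
          vf (e i) * E (df (e i) * star (df (e j))) * star (vf (e j)) := by
    rw [← Equiv.sum_comp e (fun I => ∑ J : ι, vf I * E (df I * star (df J)) * star (vf J))]
    exact Finset.sum_congr rfl fun i _ => (Equiv.sum_comp e _).symm
  rw [htrans]
  have hM := hECP n (fun i => star (df (e i))) (fun i => star_mem (hdd _ _))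
  have hM' : (Matrix.of fun i j : Fin n => E (star (star (df (e i))) * star (df (e j))))
      = Matrix.of fun i j : Fin n => E (df (e i) * star (df (e j))) := by
    ext i j
    simp
  rw [hM'] at hM
  have hfin := keymat _ hM (fun i => vf (e i))
  simpa using hfin
end

section
/- Let A be a complex unital *-algebra with a sequence (A_n)_{n≥0} of unital star-subalgebras such that for every n the ordered products a_0a_1⋯a_n with a_j ∈ A_j linearly span A_{n]}, and assume A is the union of the A_{n]}. Let φ be a state on A and suppose that for every n there is a quasi-conditional expectation E_{n]} : A_{n+1]} → A_{n]} with respect to the triplet A_{n-1]} ⊆ A_{n]} ⊆ A_{n+1]} which enjoys the Markov property E_{n]}(A_{[n,n+1]}) ⊆ A_{n-1]}' ∩ A_n and satisfies φ(x) = φ(E_{n]}(x)) for all x ∈ A_{n+1]}. Let φ₀ denote the restriction of φ to A_0. Then for every n and all a_i ∈ A_i (0 ≤ i ≤ n): φ(a_0a_1⋯a_n) = φ₀(E_{0]}(a_0 E_{1]}(a_1 (⋯ E_{n-1]}(a_{n-1} E_{n]}(a_n)) ⋯)))), and moreover φ₀(E_{0]}(E_{1]}(⋯ E_{n]}(1)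 ⋯))) = 1. -/
open Matrix
open scoped ComplexOrder

/-- `segAlg sa n` is the subalgebra `A_{n]}` generated by `A_0, …, A_n`. -/
def segAlg {A : Type*} [Ring A] [Algebra ℂ A] [StarRing A] [StarModule ℂ A]
    (sa : ℕ → StarSubalgebra ℂ A) (n : ℕ) : StarSubalgebra ℂ A :=
  ⨆ k : Fin (n + 1), sa k

/-- `prevAlg sa n` is `A_{n-1]}`, with the convention `A_{-1]} = ℂ·1`. -/
def prevAlg {A : Type*} [Ring A] [Algebra ℂ A] [StarRing A] [StarModule ℂ A]
    (sa : ℕ → StarSubalgebra ℂ A) : ℕ → StarSubalgebra ℂ A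
  | 0 => ⊥
  | n + 1 => segAlg sa n

/-- `ecomp E m k = E_m ∘ E_{m+1} ∘ ⋯ ∘ E_{m+k-1}` (the identity when `k = 0`). -/
def ecomp {A : Type*} [Ring A] [Algebra ℂ A] (E : ℕ → A →ₗ[ℂ] A) : ℕ → ℕ → A →ₗ[ℂ] A
  | _, 0 => LinearMap.id
  | m, k + 1 => E m ∘ₗ ecomp E (m + 1) k

/-- `nest E a k j = E_k(a_k · E_{k+1}(a_{k+1} ⋯ E_{k+j}(a_{k+j}) ⋯ ))`. -/
def nest {A : Type*} [Ring A] [Algebra ℂ A] (E : ℕ → A →ₗ[ℂ] A) (a : ℕ → A) :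
    ℕ → ℕ → A
  | k, 0 => E k (a k)
  | k, j + 1 => E k (a k * nest E a (k + 1) j)


section Aux
variable {A : Type*} [Ring A] [Algebra ℂ A] [StarRing A] [StarModule ℂ A]

theorem sa_le_segAlg (sa : ℕ → StarSubalgebra ℂ A) {k n : ℕ} (h : k ≤ n) :
    sa k ≤ segAlg sa n :=
  le_iSup_of_le (⟨k, by omega⟩ : Fin (n + 1)) le_rfl

theorem segAlg_mono (sa : ℕ → StarSubalgebra ℂ A) {m n : ℕ} (h : m ≤ n) :
    segAlg sa m ≤ segAlg sa n :=
  iSup_le fun i => sa_le_segAlg sa (by omega : (i : ℕ) ≤ n)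

theorem prevAlg_le (sa : ℕ → StarSubalgebra ℂ A) (k : ℕ) :
    prevAlg sa k ≤ segAlg sa k := by
  cases k with
  | zero => exact bot_le
  | succ k => exact segAlg_mono sa (Nat.le_succ k)

end Aux

/-- necessity part of the structure theorem for Markov states.
If `φ` is a backward quantum Markov state with associated Markov quasi-conditional
expectations `E_{n]}`, then `φ(a_0 a_1 ⋯ a_n) = φ₀(E_{0]}(a_0 E_{1]}(a_1 ⋯ E_{n]}(a_n)⋯)))`
and `φ₀(E_{0]}(E_{1]}(⋯ E_{n]}(1)⋯))) = 1`. -/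


theorem stmt2 {A : Type*} [Ring A] [Algebra ℂ A] [StarRing A] [StarModule ℂ A]
    (sa : ℕ → StarSubalgebra ℂ A)
    (hgen : ∀ n, ∀ x ∈ segAlg sa n,
      x ∈ Submodule.span ℂ
        {z : A | ∃ a : ℕ → A, (∀ i, a i ∈ sa i) ∧ z = (List.ofFn fun i : Fin (n + 1) => a i).prod})
    (hunion : ∀ x : A, ∃ n, x ∈ segAlg sa n)
    -- `φ` is a state on `A`
    (φ : A →ₗ[ℂ] ℂ) (hφ1 : φ 1 = 1) (hφpos : ∀ x : A, 0 ≤ φ (star x * x))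
    -- the Markov quasi-conditional expectations `E_{n]} : A_{n+1]} → A_{n]}`
    (E : ℕ → A →ₗ[ℂ] A)
    (hEmaps : ∀ n, ∀ x ∈ segAlg sa (n + 1), E n x ∈ segAlg sa n)
    (hEstar : ∀ n, ∀ x ∈ segAlg sa (n + 1), E n (star x) = star (E n x))
    (hECP : ∀ n (k : ℕ) (x : Fin k → A), (∀ i, x i ∈ segAlg sa (n + 1)) →
      MatIsPos (Matrix.of fun i j => E n (star (x i) * x j)))
    (hEmod : ∀ n, ∀ c ∈ prevAlg sa n, ∀ x ∈ segAlg sa (n + 1), E n (c * x) = c * E n x)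
    -- the Markov property `E_{n]}(A_{[n,n+1]}) ⊆ A_{n-1]}' ∩ A_n`
    (hMarkov : ∀ n, ∀ x ∈ sa n ⊔ sa (n + 1),
      (∀ y ∈ prevAlg sa n, E n x * y = y * E n x) ∧ E n x ∈ sa n)
    -- `φ = φ ∘ E_{n]}` on `A_{n+1]}`
    (hinv : ∀ n, ∀ x ∈ segAlg sa (n + 1), φ (E n x) = φ x) :
    -- conclusion (with `φ₀` the restriction of `φ` to `A_0`):
    (∀ n (a : ℕ → A), (∀ i ≤ n, a i ∈ sa i) →
      φ ((List.ofFn fun i : Fin (n + 1) => a i).prod) = φ (nest E a 0 n))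
    ∧ (∀ n, φ (ecomp E 0 (n + 1) 1) = 1) := by

  have hseg_succ : ∀ k : ℕ, segAlg sa k ≤ segAlg sa (k + 1) :=
    fun k => segAlg_mono sa (Nat.le_succ k)
  -- nested expectations land in the right subalgebra
  have nest_mem : ∀ (j k : ℕ) (a : ℕ → A), (∀ i ≤ k + j, a i ∈ sa i) →
      nest E a k j ∈ sa k := by
    intro j
    induction j with
    | zero =>
      intro k a ha
      exact (hMarkov k (a k)
        (SetLike.le_def.mp le_sup_left (ha k (by omega)))).2
    | succ j ih =>
      intro k a ha
      have h1 : nest E a (k + 1) j ∈ sa (k + 1) :=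
        ih (k + 1) a (fun i hi => ha i (by omega))
      exact (hMarkov k _
        (mul_mem (SetLike.le_def.mp le_sup_left (ha k (by omega)))
          (SetLike.le_def.mp le_sup_right h1))).2
  have key : ∀ (j k : ℕ) (a : ℕ → A) (c : A), c ∈ prevAlg sa k →
      (∀ i ≤ k + j, a i ∈ sa i) →
      φ (c * (List.ofFn fun i : Fin (j + 1) => a (k + i)).prod)
        = φ (c * nest E a k j) := by
    intro j
    induction j with
    | zero =>
      intro k a c hc ha
      have hak : a k ∈ sa k := ha k (by omega)
      have hmem : c * a k ∈ segAlg sa (k + 1) :=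
        mul_mem (hseg_succ k (prevAlg_le sa k hc)) (sa_le_segAlg sa (by omega) hak)
      have h1 : φ (E k (c * a k)) = φ (c * a k) := hinv k _ hmem
      rw [hEmod k c hc (a k) (sa_le_segAlg sa (by omega) hak)] at h1
      simpa [nest] using h1.symm
    | succ j ih =>
      intro k a c hc ha
      have hak : a k ∈ sa k := ha k (by omega)
      have hprod : (List.ofFn fun i : Fin (j + 1 + 1) => a (k + i)).prod
          = a k * (List.ofFn fun i : Fin (j + 1) => a (k + 1 + i)).prod := by
        have h1 : (List.ofFn fun i : Fin (j + 1 + 1) => a (k + i))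
            = a k :: List.ofFn fun i : Fin (j + 1) => a (k + 1 + i) := by
          rw [List.ofFn_succ (f := fun i : Fin (j + 1 + 1) => a (k + i))]
          congr 1
          exact congrArg List.ofFn (by
            funext i
            congr 1
            simp only [Fin.val_succ]
            omega)
        rw [h1, List.prod_cons]
      have hc' : c * a k ∈ segAlg sa k :=
        mul_mem (prevAlg_le sa k hc) (sa_le_segAlg sa le_rfl hak)
      have hnest : nest E a (k + 1) j ∈ sa (k + 1) :=
        nest_mem j (k + 1) a (fun i hi => ha i (by omega))
      have hx : a k * nest E a (k + 1) j ∈ segAlg sa (k + 1) :=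
        mul_mem (sa_le_segAlg sa (by omega) hak) (sa_le_segAlg sa le_rfl hnest)
      calc φ (c * (List.ofFn fun i : Fin (j + 1 + 1) => a (k + i)).prod)
          = φ ((c * a k) * (List.ofFn fun i : Fin (j + 1) => a (k + 1 + i)).prod) := by
            rw [hprod, mul_assoc]
        _ = φ ((c * a k) * nest E a (k + 1) j) :=
            ih (k + 1) a (c * a k) hc' (fun i hi => ha i (by omega))
        _ = φ (c * (a k * nest E a (k + 1) j)) := by rw [mul_assoc]
        _ = φ (E k (c * (a k * nest E a (k + 1) j))) :=
            (hinv k _ (mul_mem (hseg_succ k (prevAlg_le sa k hc)) hx)).symm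
        _ = φ (c * E k (a k * nest E a (k + 1) j)) := by rw [hEmod k c hc _ hx]
        _ = φ (c * nest E a k (j + 1)) := rfl
  refine ⟨fun n a ha => ?_, ?_⟩
  · have h := key n 0 a 1 (by exact one_mem _) (fun i hi => ha i (by omega))
    simpa using h
  · have emem : ∀ (k m : ℕ), ecomp E m k 1 ∈ segAlg sa m := by
      intro k
      induction k with
      | zero => intro m; exact one_mem _
      | succ k ih => intro m; exact hEmaps m _ (ih (m + 1))
    have ephi : ∀ (k m : ℕ), φ (ecomp E m k 1) = 1 := by
      intro k
      induction k with
      | zero => intro m; simpa [ecomp] using hφ1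
      | succ k ih =>
        intro m
        have h := hinv m _ (emem k (m + 1))
        calc φ (ecomp E m (k + 1) 1) = φ (E m (ecomp E (m + 1) k 1)) := rfl
          _ = φ (ecomp E (m + 1) k 1) := h
          _ = 1 := ih (m + 1)
    exact fun n => ephi (n + 1) 0
end

section
/- Let A be a complex unital *-algebra and Θ : A → A a *-algebra automorphism with Θ∘Θ = id. For x ∈ A write x₊ := (x + Θ(x))/2 and x₋ := (x − Θ(x))/2. Let B and C be Θ-invariant unital star-subalgebras of A satisfying the graded commutation relations: for all a ∈ B and b ∈ C, a₊b₊ = b₊a₊, a₊b₋ = b₋a₊, a₋b₊ = b₊a₋, and a₋b₋ = −b₋a₋. Let N ⊆ C be a Θ-invariant unital star-subalgebra and set N₊ := {x ∈ N : Θ(x) = x}. Assume the products {ab : a ∈ B, b ∈ C} linearly span B∨C. Let E : C → A be a completely positive linear map with E(b*) = E(b)* for all b ∈ C, E(1) = 1, E∘Θ = E on C, and E(C) ⊆ N₊. Let Ẽ : B∨C → A be a linear map with Ẽ(ab) = aE(b) for all a ∈ B, b ∈ C. Then Ẽ is a normalized quasi-conditional expectation with respect to the triplet B ⊆ B∨N₊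 ⊆ B∨C; explicitly: (i) Ẽ(1) = 1; (ii) Ẽ(x*) = Ẽ(x)* for all x ∈ B∨C; (iii) Ẽ(ax) = aẼ(x) for all a ∈ B, x ∈ B∨C; (iv) the range of Ẽ is contained in B∨N₊; (v) for every m ∈ ℕ, all a_1,…,a_m ∈ B∨N₊ and all y_1,…,y_m ∈ B∨C, the element Σ_{i,j} a_i Ẽ(y_i y_j*) a_j* is positive in A. -/
open Matrix

/-- The even part `x₊ = (x + Θ(x))/2` of `x` with respect to an involution `Θ`. -/
noncomputable def evenPart {A : Type*} [Ring A] [Algebra ℂ A] (Θ : A ≃ₐ[ℂ] A) (x : A) : A :=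
  (2 : ℂ)⁻¹ • (x + Θ x)

/-- The odd part `x₋ = (x − Θ(x))/2` of `x` with respect to an involution `Θ`. -/
noncomputable def oddPart {A : Type*} [Ring A] [Algebra ℂ A] (Θ : A ≃ₐ[ℂ] A) (x : A) : A :=
  (2 : ℂ)⁻¹ • (x - Θ x)

/-- If `M` is a positive matrix and `u` any vector, then `∑ i j, u i * M i j * star (u j)`
is a positive element. -/
lemma posKey {A : Type*} [Ring A] [StarRing A] {k : ℕ}
    (M : Matrix (Fin k) (Fin k) A) (hM : MatIsPos M) (u : Fin k → A) :
    IsPosElem (∑ i, ∑ j, u i * M i j * star (u j)) := by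
  induction hM using AddSubmonoid.closure_induction with
  | mem X hX =>
    obtain ⟨D, rfl⟩ := hX
    have key : ∑ i, ∑ j, u i * (Dᴴ * D) i j * star (u j)
        = ∑ p, star (∑ j, D p j * star (u j)) * (∑ j, D p j * star (u j)) := by
      calc ∑ i, ∑ j, u i * (Dᴴ * D) i j * star (u j)
          = ∑ i, ∑ j, ∑ p, u i * star (D p i) * (D p j * star (u j)) := by
            refine Finset.sum_congr rfl fun i _ => Finset.sum_congr rfl fun j _ => ?_
            rw [Matrix.mul_apply, Finset.mul_sum, Finset.sum_mul]
            exact Finset.sum_congr rfl fun p _ => by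
              rw [Matrix.conjTranspose_apply]; noncomm_ring
        _ = ∑ i, ∑ p, ∑ j, u i * star (D p i) * (D p j * star (u j)) :=
            Finset.sum_congr rfl fun i _ => Finset.sum_comm
        _ = ∑ p, ∑ i, ∑ j, u i * star (D p i) * (D p j * star (u j)) := Finset.sum_comm
        _ = ∑ p, (∑ i, u i * star (D p i)) * (∑ j, D p j * star (u j)) := by
            refine Finset.sum_congr rfl fun p _ => ?_
            rw [Finset.sum_mul]
            exact Finset.sum_congr rfl fun i _ => (Finset.mul_sum _ _ _).symm
        _ = ∑ p, star (∑ j, D p j * star (u j)) * (∑ j, D p j * star (u j)) := by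
            refine Finset.sum_congr rfl fun p _ => ?_
            congr 1
            rw [star_sum]
            exact (Finset.sum_congr rfl fun j _ => by
              rw [StarMul.star_mul, star_star]).symm
    rw [key]
    exact AddSubmonoid.sum_mem _ fun p _ => AddSubmonoid.subset_closure ⟨_, rfl⟩
  | zero =>
    simp only [Matrix.zero_apply, mul_zero, zero_mul, Finset.sum_const_zero]
    exact zero_mem _
  | add X Y hX hY ihX ihY =>
    have : ∑ i, ∑ j, u i * (X + Y) i j * star (u j)
        = (∑ i, ∑ j, u i * X i j * star (u j)) + ∑ i, ∑ j, u i * Y i j * star (u j) := by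
      rw [← Finset.sum_add_distrib]
      refine Finset.sum_congr rfl fun i _ => ?_
      rw [← Finset.sum_add_distrib]
      refine Finset.sum_congr rfl fun j _ => ?_
      simp [Matrix.add_apply, mul_add, add_mul]
    rw [this]
    exact add_mem ihX ihY

/-- Fermi case.  If `E : C → A` is an even, completely positive,
star-preserving, unital map with `E(C) ⊆ N₊` and `Ẽ : B ∨ C → A` satisfies
`Ẽ(ab) = a E(b)`, then `Ẽ` is a normalized quasi-conditional expectation with respect to
the triplet `B ⊆ B ∨ N₊ ⊆ B ∨ C`. -/
theorem stmt5 {A : Type*} [Ring A] [Algebra ℂ A] [StarRing A] [StarModule ℂ A]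
    (Θ : A ≃ₐ[ℂ] A) (hΘstar : ∀ a, Θ (star a) = star (Θ a)) (hΘinv : ∀ a, Θ (Θ a) = a)
    (B C : StarSubalgebra ℂ A)
    (hBinv : ∀ x ∈ B, Θ x ∈ B) (hCinv : ∀ x ∈ C, Θ x ∈ C)
    -- graded commutation relations between `B` and `C`
    (hgraded : ∀ a ∈ B, ∀ b ∈ C,
      evenPart Θ a * evenPart Θ b = evenPart Θ b * evenPart Θ a
      ∧ evenPart Θ a * oddPart Θ b = oddPart Θ b * evenPart Θ a
      ∧ oddPart Θ a * evenPart Θ b = evenPart Θ b * oddPart Θ a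
      ∧ oddPart Θ a * oddPart Θ b = -(oddPart Θ b * oddPart Θ a))
    (N : StarSubalgebra ℂ A) (hNC : N ≤ C) (hNinv : ∀ x ∈ N, Θ x ∈ N)
    -- ordered products linearly span `B ∨ C`
    (hspan : ∀ x ∈ B ⊔ C,
      x ∈ Submodule.span ℂ {z : A | ∃ a ∈ B, ∃ b ∈ C, z = a * b})
    -- `E : C → A` completely positive, star-preserving, unital, even, with `E(C) ⊆ N₊`
    (E : A →ₗ[ℂ] A)
    (hECP : ∀ (k : ℕ) (b : Fin k → A), (∀ i, b i ∈ C) →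
      MatIsPos (Matrix.of fun i j => E (star (b i) * b j)))
    (hEstar : ∀ b ∈ C, E (star b) = star (E b))
    (hE1 : E 1 = 1)
    (hEeven : ∀ b ∈ C, E (Θ b) = E b)
    (hErange : ∀ b ∈ C, E b ∈ N ∧ Θ (E b) = E b)
    -- `Ẽ : B ∨ C → A` with `Ẽ(ab) = a E(b)`
    (Etil : A →ₗ[ℂ] A)
    (hEtil : ∀ a ∈ B, ∀ b ∈ C, Etil (a * b) = a * E b) :
    -- (i) `Ẽ` is normalized
    Etil 1 = 1
    -- (ii) `Ẽ` is a `*`-map on `B ∨ C`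
    ∧ (∀ x ∈ B ⊔ C, Etil (star x) = star (Etil x))
    -- (iii) `Ẽ` is a `B`-module map
    ∧ (∀ a ∈ B, ∀ x ∈ B ⊔ C, Etil (a * x) = a * Etil x)
    -- (iv) the range of `Ẽ` is contained in `B ∨ N₊`
    ∧ (∀ x ∈ B ⊔ C,
        Etil x ∈ StarAlgebra.adjoin ℂ ((B : Set A) ∪ {y : A | y ∈ N ∧ Θ y = y}))
    -- (v) complete positivity relative to `B ∨ N₊`
    ∧ (∀ (m : ℕ) (a y : Fin m → A),
        (∀ i, a i ∈ StarAlgebra.adjoin ℂ ((B : Set A) ∪ {y : A | y ∈ N ∧ Θ y = y})) →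
        (∀ i, y i ∈ B ⊔ C) →
        IsPosElem (∑ i, ∑ j, a i * Etil (y i * star (y j)) * star (a j))) := by
  have hsplit : ∀ x : A, evenPart Θ x + oddPart Θ x = x := by
    intro x
    rw [evenPart, oddPart, ← smul_add]
    rw [show x + Θ x + (x - Θ x) = x + x by abel, ← two_smul ℂ x, smul_smul]
    norm_num
  have hΘsplit : ∀ x : A, evenPart Θ x - oddPart Θ x = Θ x := by
    intro x
    rw [evenPart, oddPart, ← smul_sub]
    rw [show x + Θ x - (x - Θ x) = Θ x + Θ x by abel, ← two_smul ℂ (Θ x), smul_smul]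
    norm_num
  have hBeven : ∀ a ∈ B, evenPart Θ a ∈ B := fun a ha =>
    B.smul_mem (B.add_mem ha (hBinv a ha)) _
  have hBodd : ∀ a ∈ B, oddPart Θ a ∈ B := fun a ha =>
    B.smul_mem (B.sub_mem ha (hBinv a ha)) _
  have hcomm1 : ∀ a ∈ B, ∀ b ∈ C,
      b * a = evenPart Θ a * b + oddPart Θ a * Θ b := by
    intro a ha b hb
    obtain ⟨h1, h2, h3, h4⟩ := hgraded a ha b hb
    have hb' : oddPart Θ b * oddPart Θ a = -(oddPart Θ a * oddPart Θ b) := by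
      rw [h4, neg_neg]
    calc b * a = (evenPart Θ b + oddPart Θ b) * (evenPart Θ a + oddPart Θ a) := by
          rw [hsplit, hsplit]
      _ = evenPart Θ b * evenPart Θ a + evenPart Θ b * oddPart Θ a
          + (oddPart Θ b * evenPart Θ a + oddPart Θ b * oddPart Θ a) := by noncomm_ring
      _ = evenPart Θ a * evenPart Θ b + oddPart Θ a * evenPart Θ b
          + (evenPart Θ a * oddPart Θ b + -(oddPart Θ a * oddPart Θ b)) := by
          rw [← h1, ← h3, ← h2, hb']
      _ = evenPart Θ a * (evenPart Θ b + oddPart Θ b)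
          + oddPart Θ a * (evenPart Θ b - oddPart Θ b) := by noncomm_ring
      _ = evenPart Θ a * b + oddPart Θ a * Θ b := by rw [hsplit, hΘsplit]
  have hEtil' : ∀ a ∈ B, ∀ b ∈ C, Etil (b * a) = a * E b := by
    intro a ha b hb
    rw [hcomm1 a ha b hb, map_add, hEtil _ (hBeven a ha) _ hb,
      hEtil _ (hBodd a ha) _ (hCinv b hb), hEeven b hb, ← add_mul, hsplit]
  have hNcomm : ∀ n, n ∈ N → Θ n = n → ∀ a ∈ B, n * a = a * n := by
    intro n hn hΘn a ha
    rw [hcomm1 a ha n (hNC hn), hΘn, ← add_mul, hsplit]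
  have hEcomm : ∀ b ∈ C, ∀ a ∈ B, E b * a = a * E b := fun b hb a ha =>
    hNcomm _ (hErange b hb).1 (hErange b hb).2 a ha
  have hkey : ∀ b ∈ B, ∀ b' ∈ B, ∀ c ∈ C, ∀ c' ∈ C,
      Etil (b * c * (star c' * star b')) = b * E (c * star c') * star b' := by
    intro b hb b' hb' c hc c' hc'
    have hw : c * star c' ∈ C := mul_mem hc (star_mem hc')
    have ha' : (star b' : A) ∈ B := star_mem hb'
    calc Etil (b * c * (star c' * star b'))
        = Etil (b * evenPart Θ (star b') * (c * star c')
            + b * oddPart Θ (star b') * Θ (c * star c')) := by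
          rw [show b * c * (star c' * star b') = b * ((c * star c') * star b') by
            noncomm_ring, hcomm1 _ ha' _ hw]
          congr 1
          noncomm_ring
      _ = b * evenPart Θ (star b') * E (c * star c')
          + b * oddPart Θ (star b') * E (Θ (c * star c')) := by
          rw [map_add, hEtil _ (B.mul_mem hb (hBeven _ ha')) _ hw,
            hEtil _ (B.mul_mem hb (hBodd _ ha')) _ (hCinv _ hw)]
      _ = b * (star b' * E (c * star c')) := by
          rw [hEeven _ hw, mul_assoc, mul_assoc, ← mul_add, ← add_mul, hsplit]
      _ = b * E (c * star c') * star b' := by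
          rw [← hEcomm _ hw _ ha', ← mul_assoc]
  have part1 : Etil 1 = 1 := by
    have := hEtil 1 B.one_mem 1 C.one_mem
    simpa [hE1] using this
  refine ⟨part1, ?_, ?_, ?_, ?_⟩
  · -- (ii)
    intro x hx
    have hx' := hspan x hx
    clear hx
    induction hx' using Submodule.span_induction with
    | mem z hz =>
      obtain ⟨a, ha, b, hb, rfl⟩ := hz
      rw [StarMul.star_mul, hEtil' _ (star_mem ha) _ (star_mem hb),
        hEtil _ ha _ hb, StarMul.star_mul, ← hEstar _ hb,
        hEcomm _ (star_mem hb) _ (star_mem ha)]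
    | zero => simp
    | add u v hu hv ihu ihv => rw [star_add, map_add, map_add, star_add, ihu, ihv]
    | smul r u hu ihu => rw [star_smul, _root_.map_smul, _root_.map_smul, star_smul, ihu]
  · -- (iii)
    intro a ha x hx
    have hx' := hspan x hx
    clear hx
    induction hx' using Submodule.span_induction with
    | mem z hz =>
      obtain ⟨b, hb, c, hc, rfl⟩ := hz
      rw [← mul_assoc, hEtil _ (B.mul_mem ha hb) _ hc, hEtil _ hb _ hc, mul_assoc]
    | zero => simp
    | add u v hu hv ihu ihv => rw [mul_add, map_add, map_add, mul_add, ihu, ihv]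
    | smul r u hu ihu => rw [mul_smul_comm, _root_.map_smul, _root_.map_smul, mul_smul_comm, ihu]
  · -- (iv)
    intro x hx
    have hx' := hspan x hx
    clear hx
    induction hx' using Submodule.span_induction with
    | mem z hz =>
      obtain ⟨a, ha, b, hb, rfl⟩ := hz
      rw [hEtil _ ha _ hb]
      exact mul_mem (StarAlgebra.subset_adjoin ℂ ((B : Set A) ∪ {y : A | y ∈ N ∧ Θ y = y}) (Set.mem_union_left _ ha))
        (StarAlgebra.subset_adjoin ℂ ((B : Set A) ∪ {y : A | y ∈ N ∧ Θ y = y})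
          (Set.mem_union_right _ ⟨(hErange b hb).1, (hErange b hb).2⟩))
    | zero => simp only [map_zero]; exact zero_mem _
    | add u v hu hv ihu ihv => rw [map_add]; exact add_mem ihu ihv
    | smul r u hu ihu =>
      rw [_root_.map_smul]
      exact SMulMemClass.smul_mem r ihu
  · -- (v)
    intro m a y _ hy
    have hrep : ∀ i, ∃ (n : ℕ) (f : Fin n → ℂ) (b c : Fin n → A),
        (∀ k, b k ∈ B) ∧ (∀ k, c k ∈ C) ∧ y i = ∑ k, f k • (b k * c k) := by
      intro i
      obtain ⟨n, f, g, hg⟩ := Submodule.mem_span_set'.1 (hspan (y i) (hy i))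
      choose b hb c hc hbc using fun k => (g k).2
      exact ⟨n, f, b, c, hb, hc, by
        rw [← hg]; exact (Finset.sum_congr rfl fun k _ => by rw [hbc]).symm⟩
    choose n f b c hb hc hyrep using hrep
    set ι := (i : Fin m) × Fin (n i) with hι
    let e : Fin (Fintype.card ι) ≃ ι := (Fintype.equivFin ι).symm
    set d : Fin (Fintype.card ι) → A := fun p => star (c (e p).1 (e p).2) with hd
    set u : Fin (Fintype.card ι) → A :=
      fun p => f (e p).1 (e p).2 • (a (e p).1 * b (e p).1 (e p).2) with hu
    have hdC : ∀ p, d p ∈ C := fun p => star_mem (hc _ _)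
    have hpos := posKey _ (hECP (Fintype.card ι) d hdC) u
    -- the per-pair term
    set G : ι → ι → A := fun P Q =>
      (f P.1 P.2 • (a P.1 * b P.1 P.2)) * E (c P.1 P.2 * star (c Q.1 Q.2))
        * star (f Q.1 Q.2 • (a Q.1 * b Q.1 Q.2)) with hG
    have hterm : ∀ i j, a i * Etil (y i * star (y j)) * star (a j)
        = ∑ k, ∑ l, G ⟨i, k⟩ ⟨j, l⟩ := by
      intro i j
      have h1 : y i * star (y j) = ∑ k, ∑ l,
          (f i k * star (f j l)) • (b i k * c i k * (star (c j l) * star (b j l))) := by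
        rw [hyrep i, hyrep j, star_sum, Finset.sum_mul_sum]
        refine Finset.sum_congr rfl fun k _ => Finset.sum_congr rfl fun l _ => ?_
        rw [star_smul, StarMul.star_mul, smul_mul_assoc, mul_smul_comm, smul_smul]
      rw [h1, map_sum, Finset.mul_sum, Finset.sum_mul]
      refine Finset.sum_congr rfl fun k _ => ?_
      rw [map_sum, Finset.mul_sum, Finset.sum_mul]
      refine Finset.sum_congr rfl fun l _ => ?_
      rw [_root_.map_smul, hkey _ (hb i k) _ (hb j l) _ (hc i k) _ (hc j l), hG]
      simp only [star_smul, StarMul.star_mul, smul_mul_assoc, mul_smul_comm, smul_smul]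
      rw [mul_comm (star (f j l)) (f i k)]
      congr 1
      noncomm_ring
    have main : ∑ i, ∑ j, a i * Etil (y i * star (y j)) * star (a j)
        = ∑ p, ∑ q, u p * (Matrix.of fun p q => E (star (d p) * d q)) p q * star (u q) := by
      calc ∑ i, ∑ j, a i * Etil (y i * star (y j)) * star (a j)
          = ∑ i, ∑ j, ∑ k, ∑ l, G ⟨i, k⟩ ⟨j, l⟩ :=
            Finset.sum_congr rfl fun i _ => Finset.sum_congr rfl fun j _ => hterm i j
        _ = ∑ i, ∑ k, ∑ j, ∑ l, G ⟨i, k⟩ ⟨j, l⟩ :=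
            Finset.sum_congr rfl fun i _ => Finset.sum_comm
        _ = ∑ P : ι, ∑ j, ∑ l, G P ⟨j, l⟩ := by
            rw [Finset.sum_sigma', Finset.univ_sigma_univ]
        _ = ∑ P : ι, ∑ Q : ι, G P Q := by
            refine Finset.sum_congr rfl fun P _ => ?_
            rw [Finset.sum_sigma', Finset.univ_sigma_univ]
        _ = ∑ p, ∑ q, u p * (Matrix.of fun p q => E (star (d p) * d q)) p q * star (u q) := by
            refine (Fintype.sum_equiv e _ _ fun p => ?_).symm
            refine Fintype.sum_equiv e _ _ fun q => ?_
            simp only [hu, hd, hG, Matrix.of_apply, star_star]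
    rw [main]
    exact hpos
end

section
/- Let A be a complex unital *-algebra and Θ : A → A a *-algebra automorphism with Θ∘Θ = id. For x ∈ A write x₊ := (x + Θ(x))/2 and x₋ := (x − Θ(x))/2. Let B and C be Θ-invariant unital star-subalgebras of A satisfying the graded commutation relations: for all a ∈ B and b ∈ C, a₊b₊ = b₊a₊, a₊b₋ = b₋a₊, a₋b₊ = b₊a₋, and a₋b₋ = −b₋a₋. Let E : C → A be a linear map with E∘Θ = E on C and whose range commutes elementwise with B. Let Ẽ : B∨C → A be a linear map with Ẽ(ab) = aE(b) for all a ∈ B, b ∈ C. Then Ẽ(ab) = Ẽ(ba) for all a ∈ B and b ∈ C; in particular E(b₋) = 0 for every b ∈ C. -/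
/-- If `E : C → A` is even with range commuting with `B`, and
`Ẽ(ab) = a E(b)` for `a ∈ B`, `b ∈ C`, then `Ẽ` enjoys the trace-like property
`Ẽ(ab) = Ẽ(ba)`; in particular `E` vanishes on odd parts. -/
theorem stmt6 {A : Type*} [Ring A] [Algebra ℂ A] [StarRing A] [StarModule ℂ A]
    (Θ : A ≃ₐ[ℂ] A) (hΘstar : ∀ a, Θ (star a) = star (Θ a)) (hΘinv : ∀ a, Θ (Θ a) = a)
    (B C : StarSubalgebra ℂ A)
    (hBinv : ∀ x ∈ B, Θ x ∈ B) (hCinv : ∀ x ∈ C, Θ x ∈ C)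
    -- graded commutation relations between `B` and `C`
    (hgraded : ∀ a ∈ B, ∀ b ∈ C,
      evenPart Θ a * evenPart Θ b = evenPart Θ b * evenPart Θ a
      ∧ evenPart Θ a * oddPart Θ b = oddPart Θ b * evenPart Θ a
      ∧ oddPart Θ a * evenPart Θ b = evenPart Θ b * oddPart Θ a
      ∧ oddPart Θ a * oddPart Θ b = -(oddPart Θ b * oddPart Θ a))
    -- `E : C → A` even, with range commuting elementwise with `B`
    (E : A →ₗ[ℂ] A)
    (hEeven : ∀ b ∈ C, E (Θ b) = E b)
    (hEcomm : ∀ b ∈ C, ∀ a ∈ B, E b * a = a * E b)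
    -- `Ẽ : B ∨ C → A` with `Ẽ(ab) = a E(b)`
    (Etil : A →ₗ[ℂ] A)
    (hEtil : ∀ a ∈ B, ∀ b ∈ C, Etil (a * b) = a * E b) :
    (∀ a ∈ B, ∀ b ∈ C, Etil (a * b) = Etil (b * a))
    ∧ (∀ b ∈ C, E (oddPart Θ b) = 0) := by
  have even_add_odd : ∀ x : A, evenPart Θ x + oddPart Θ x = x := by
    intro x
    unfold evenPart oddPart
    rw [← smul_add]
    have h : (x + Θ x) + (x - Θ x) = (2 : ℂ) • x := by rw [two_smul]; abel
    rw [h, smul_smul, inv_mul_cancel₀ two_ne_zero, one_smul]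
  have hEodd : ∀ b ∈ C, E (oddPart Θ b) = 0 := by
    intro b hb
    unfold oddPart
    rw [map_smul, map_sub, hEeven b hb, sub_self, smul_zero]
  refine ⟨?_, hEodd⟩
  intro a ha b hb
  obtain ⟨h1, h2, h3, h4⟩ := hgraded a ha b hb
  have hcomm : a * b - b * a = (2 : ℂ) • (oddPart Θ a * oddPart Θ b) := by
    conv_lhs => rw [← even_add_odd a, ← even_add_odd b]
    rw [add_mul, add_mul, mul_add, mul_add, mul_add, mul_add,
      ← h1, ← h3, ← h2]
    have hb4 : oddPart Θ b * oddPart Θ a = -(oddPart Θ a * oddPart Θ b) := by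
      rw [h4, neg_neg]
    rw [hb4, two_smul]
    abel
  have haodd : oddPart Θ a ∈ B := by
    unfold oddPart
    exact B.smul_mem (B.sub_mem ha (hBinv a ha)) _
  have hbodd : oddPart Θ b ∈ C := by
    unfold oddPart
    exact C.smul_mem (C.sub_mem hb (hCinv b hb)) _
  have : Etil (a * b) - Etil (b * a) = 0 := by
    rw [← map_sub, hcomm, map_smul, hEtil _ haodd _ hbodd, hEodd b hb,
      mul_zero, smul_zero]
  exact sub_eq_zero.mp this
end

section
/- Let M and V be complex unital *-algebras and let M ⊗ V denote their algebraic tensor product over ℂ, equipped with the star operation determined by (x ⊗ y)* = x* ⊗ y*. If A = (a_{ij}) ∈ M_n(M) is positive (a finite sum of matrices C*C with C ∈ M_n(M)) and B = (b_{ij}) ∈ M_n(V) is positive (a finite sum of matrices D*D with D ∈ M_n(V)), then the Schur tensor product A∘⊗B := (a_{ij} ⊗ b_{ij}) ∈ M_n(M ⊗ V) is positive, i.e. a finite sum of matrices of the form F*F with F ∈ M_n(M ⊗ V). -/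
open Matrix
open scoped TensorProduct

/-- Schur tensor product lemma.  Let `sstar` be the star operation on the
algebraic tensor product `M ⊗[ℂ] V`, i.e. the additive map determined by
`sstar (x ⊗ₜ y) = star x ⊗ₜ star y`.  If `A ∈ Mₙ(M)` and `B ∈ Mₙ(V)` are positive (finite
sums of matrices of the form `C* C`), then their Schur tensor product
`A ∘⊗ B = (a_{ij} ⊗ b_{ij})` is positive in `Mₙ(M ⊗ V)`. -/
theorem stmt8 {M V : Type*}
    [Ring M] [Algebra ℂ M] [StarRing M] [StarModule ℂ M]
    [Ring V] [Algebra ℂ V] [StarRing V] [StarModule ℂ V]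
    (sstar : M ⊗[ℂ] V →+ M ⊗[ℂ] V)
    (hsstar : ∀ (x : M) (y : V), sstar (x ⊗ₜ[ℂ] y) = star x ⊗ₜ[ℂ] star y)
    (n : ℕ) (A : Matrix (Fin n) (Fin n) M) (B : Matrix (Fin n) (Fin n) V)
    (hA : A ∈ AddSubmonoid.closure
      {Y : Matrix (Fin n) (Fin n) M | ∃ C : Matrix (Fin n) (Fin n) M, Y = Cᴴ * C})
    (hB : B ∈ AddSubmonoid.closure
      {Y : Matrix (Fin n) (Fin n) V | ∃ D : Matrix (Fin n) (Fin n) V, Y = Dᴴ * D}) :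
    (Matrix.of fun i j => A i j ⊗ₜ[ℂ] B i j) ∈ AddSubmonoid.closure
      {Y : Matrix (Fin n) (Fin n) (M ⊗[ℂ] V) |
        ∃ F : Matrix (Fin n) (Fin n) (M ⊗[ℂ] V),
          Y = (Matrix.of fun i j => sstar (F j i)) * F} := by
  rcases Nat.eq_zero_or_pos n with hn | hn
  · subst hn
    have h0 : (Matrix.of fun i j => A i j ⊗ₜ[ℂ] B i j) = 0 := Subsingleton.elim _ _
    rw [h0]; exact zero_mem _
  set z : Fin n := ⟨0, hn⟩ with hz
  -- base case: both A and B of the special form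
  have base : ∀ (C : Matrix (Fin n) (Fin n) M) (D : Matrix (Fin n) (Fin n) V),
      (Matrix.of fun i j => (Cᴴ * C) i j ⊗ₜ[ℂ] (Dᴴ * D) i j) ∈ AddSubmonoid.closure
        {Y : Matrix (Fin n) (Fin n) (M ⊗[ℂ] V) |
          ∃ F : Matrix (Fin n) (Fin n) (M ⊗[ℂ] V),
            Y = (Matrix.of fun i j => sstar (F j i)) * F} := by
    intro C D
    have key : (Matrix.of fun i j => (Cᴴ * C) i j ⊗ₜ[ℂ] (Dᴴ * D) i j)
        = ∑ k : Fin n, ∑ l : Fin n,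
          (Matrix.of fun i j => sstar ((Matrix.of fun r j' =>
              if r = z then C k j' ⊗ₜ[ℂ] D l j' else 0) j i)) *
          (Matrix.of fun r j' => if r = z then C k j' ⊗ₜ[ℂ] D l j' else 0) := by
      ext i j
      simp only [Matrix.sum_apply, Matrix.mul_apply, Matrix.of_apply,
        Matrix.conjTranspose_apply]
      have hterm : ∀ k l : Fin n,
          ∑ r : Fin n, sstar (if r = z then C k i ⊗ₜ[ℂ] D l i else 0) *
            (if r = z then C k j ⊗ₜ[ℂ] D l j else 0)
          = (star (C k i) * C k j) ⊗ₜ[ℂ] (star (D l i) * D l j) := by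
        intro k l
        rw [Finset.sum_eq_single z]
        · simp [hsstar, Algebra.TensorProduct.tmul_mul_tmul]
        · intro r _ hr; simp [hr]
        · simp
      simp only [hterm]
      rw [TensorProduct.sum_tmul]
      congr 1
      ext k
      rw [TensorProduct.tmul_sum]
    rw [key]
    exact sum_mem fun k _ => sum_mem fun l _ =>
      AddSubmonoid.subset_closure ⟨_, rfl⟩
  -- step 1: fix A of special form, induct on B
  have stepB : ∀ (C : Matrix (Fin n) (Fin n) M),
      (Matrix.of fun i j => (Cᴴ * C) i j ⊗ₜ[ℂ] B i j) ∈ AddSubmonoid.closure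
        {Y : Matrix (Fin n) (Fin n) (M ⊗[ℂ] V) |
          ∃ F : Matrix (Fin n) (Fin n) (M ⊗[ℂ] V),
            Y = (Matrix.of fun i j => sstar (F j i)) * F} := by
    intro C
    induction hB using AddSubmonoid.closure_induction with
    | mem B' hB' => obtain ⟨D, rfl⟩ := hB'; exact base C D
    | zero =>
        have h0 : (Matrix.of fun i j =>
            (Cᴴ * C) i j ⊗ₜ[ℂ] (0 : Matrix (Fin n) (Fin n) V) i j) = 0 := by
          ext i j; simp
        rw [h0]; exact zero_mem _
    | add B1 B2 _ _ ih1 ih2 =>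
        have h0 : (Matrix.of fun i j => (Cᴴ * C) i j ⊗ₜ[ℂ] (B1 + B2) i j)
            = (Matrix.of fun i j => (Cᴴ * C) i j ⊗ₜ[ℂ] B1 i j)
              + (Matrix.of fun i j => (Cᴴ * C) i j ⊗ₜ[ℂ] B2 i j) := by
          ext i j; simp [TensorProduct.tmul_add]
        rw [h0]; exact add_mem ih1 ih2
  -- step 2: induct on A
  induction hA using AddSubmonoid.closure_induction with
  | mem A' hA' => obtain ⟨C, rfl⟩ := hA'; exact stepB C
  | zero =>
      have h0 : (Matrix.of fun i j =>
          (0 : Matrix (Fin n) (Fin n) M) i j ⊗ₜ[ℂ] B i j) = 0 := by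
        ext i j; simp
      rw [h0]; exact zero_mem _
  | add A1 A2 _ _ ih1 ih2 =>
      have h0 : (Matrix.of fun i j => (A1 + A2) i j ⊗ₜ[ℂ] B i j)
          = (Matrix.of fun i j => A1 i j ⊗ₜ[ℂ] B i j)
            + (Matrix.of fun i j => A2 i j ⊗ₜ[ℂ] B i j) := by
        ext i j; simp [TensorProduct.add_tmul]
      rw [h0]; exact add_mem ih1 ih2
end

section
/- Let A be a complex unital *-algebra, B and C unital star-subalgebras of A such that the products {bc : b ∈ B, c ∈ C} linearly span B∨C. Let E : C → A be a linear map with E(c*) = E(c)* for all c ∈ C and whose range commutes elementwise with B, and let Ẽ : B∨C → A be a linear map satisfying Ẽ(bc) = bE(c) for all b ∈ B, c ∈ C. Then Ẽ is a *-map (Ẽ(x*) = Ẽ(x)* for all x ∈ B∨C) if and only if Ẽ(bc) = Ẽ(cb) for all b ∈ B, c ∈ C. -/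
/-- With `Ẽ(bc) = b E(c)` for `b ∈ B`, `c ∈ C`, where `E` is
star-preserving with range commuting with `B`, the map `Ẽ` is a `*`-map on `B ∨ C` if and
only if it enjoys the trace-like property `Ẽ(bc) = Ẽ(cb)`. -/
theorem stmt12 {A : Type*} [Ring A] [Algebra ℂ A] [StarRing A] [StarModule ℂ A]
    (B C : StarSubalgebra ℂ A)
    (hspan : ∀ x ∈ B ⊔ C,
      x ∈ Submodule.span ℂ {z : A | ∃ b ∈ B, ∃ c ∈ C, z = b * c})
    (E : A →ₗ[ℂ] A)
    (hEstar : ∀ c ∈ C, E (star c) = star (E c))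
    (hEcomm : ∀ c ∈ C, ∀ b ∈ B, E c * b = b * E c)
    (Etil : A →ₗ[ℂ] A)
    (hEtil : ∀ b ∈ B, ∀ c ∈ C, Etil (b * c) = b * E c) :
    (∀ x ∈ B ⊔ C, Etil (star x) = star (Etil x))
      ↔ (∀ b ∈ B, ∀ c ∈ C, Etil (b * c) = Etil (c * b)) := by
  constructor
  · intro h b hb c hc
    have hb' : (star b : A) ∈ B := star_mem hb
    have hc' : (star c : A) ∈ C := star_mem hc
    have hmem : (star b * star c : A) ∈ B ⊔ C :=
      mul_mem ((le_sup_left : B ≤ B ⊔ C) hb') ((le_sup_right : C ≤ B ⊔ C) hc')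
    have h1 := h _ hmem
    have h2 : star (star b * star c) = c * b := by
      simp [star_mul]
    rw [h2] at h1
    rw [h1, hEtil _ hb' _ hc', hEstar _ hc, hEtil _ hb _ hc, star_mul, star_star,
      ← hEcomm _ hc _ hb, star_star]
  · intro h x hx
    refine Submodule.span_induction ?_ ?_ ?_ ?_ (hspan x hx)
    · rintro z ⟨b, hb, c, hc, rfl⟩
      have hb' : (star b : A) ∈ B := star_mem hb
      have hc' : (star c : A) ∈ C := star_mem hc
      have h1 : star (b * c) = star c * star b := star_mul b c
      rw [h1, ← h _ hb' _ hc', hEtil _ hb' _ hc', hEstar _ hc, hEtil _ hb _ hc,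
        ← hEcomm _ hc _ hb, star_mul]

    · simp
    · intro x y _ _ hx hy
      simp [star_add, hx, hy]
    · intro a x _ hx
      simp [star_smul, hx]
end

section
/- Let A be a complex unital *-algebra, B and C unital star-subalgebras of A such that the products {bc : b ∈ B, c ∈ C} linearly span B∨C. Let E : C → A be a linear map with E(c*) = E(c)* for all c ∈ C and range commuting elementwise with B, and let E⁰ : C → C be a linear map whose range commutes elementwise with B. Let Ẽ, Ẽ⁰ : B∨C → B∨C be linear maps satisfying Ẽ(bc) = bE(c) and Ẽ⁰(bc) = bE⁰(c) = Ẽ⁰(cb) for all b ∈ B, c ∈ C. Then: (1) if Ẽ ∘ Ẽ⁰ = Ẽ, then Ẽ(bc) = Ẽ(cb) for all b ∈ B, c ∈ C, and hence Ẽ is a *-map; (2) Ẽ ∘ Ẽ⁰ = Ẽ if and only if E ∘ E⁰ = E. -/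
/-- Let `Ẽ, Ẽ⁰ : B ∨ C → B ∨ C` be the extensions of `E, E⁰ : C → …`
determined by `Ẽ(bc) = b E(c)` and `Ẽ⁰(bc) = b E⁰(c) = Ẽ⁰(cb)`.  Then:
(1) `Ẽ ∘ Ẽ⁰ = Ẽ` implies the trace-like property of `Ẽ`, hence that `Ẽ` is a `*`-map;
(2) `Ẽ ∘ Ẽ⁰ = Ẽ` if and only if `E ∘ E⁰ = E`. -/
theorem stmt13 {A : Type*} [Ring A] [Algebra ℂ A] [StarRing A] [StarModule ℂ A]
    (B C : StarSubalgebra ℂ A)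
    (hspan : ∀ x ∈ B ⊔ C,
      x ∈ Submodule.span ℂ {z : A | ∃ b ∈ B, ∃ c ∈ C, z = b * c})
    -- `E : C → A`, star-preserving, with range commuting elementwise with `B`
    (E : A →ₗ[ℂ] A)
    (hEstar : ∀ c ∈ C, E (star c) = star (E c))
    (hEcomm : ∀ c ∈ C, ∀ b ∈ B, E c * b = b * E c)
    -- `E⁰ : C → C`, with range commuting elementwise with `B`
    (E0 : A →ₗ[ℂ] A)
    (hE0maps : ∀ c ∈ C, E0 c ∈ C)
    (hE0comm : ∀ c ∈ C, ∀ b ∈ B, E0 c * b = b * E0 c)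
    -- the extensions `Ẽ, Ẽ⁰ : B ∨ C → B ∨ C`
    (Etil Etil0 : A →ₗ[ℂ] A)
    (hEtilmaps : ∀ x ∈ B ⊔ C, Etil x ∈ B ⊔ C)
    (hEtil0maps : ∀ x ∈ B ⊔ C, Etil0 x ∈ B ⊔ C)
    (hEtil : ∀ b ∈ B, ∀ c ∈ C, Etil (b * c) = b * E c)
    (hEtil0 : ∀ b ∈ B, ∀ c ∈ C, Etil0 (b * c) = b * E0 c ∧ Etil0 (c * b) = b * E0 c) :
    -- (1)
    ((∀ x ∈ B ⊔ C, Etil (Etil0 x) = Etil x) →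
      (∀ b ∈ B, ∀ c ∈ C, Etil (b * c) = Etil (c * b))
        ∧ (∀ x ∈ B ⊔ C, Etil (star x) = star (Etil x)))
    -- (2)
    ∧ ((∀ x ∈ B ⊔ C, Etil (Etil0 x) = Etil x) ↔ (∀ c ∈ C, E (E0 c) = E c)) := by
  have hB : ∀ b ∈ B, b ∈ B ⊔ C := fun b hb => (le_sup_left : B ≤ B ⊔ C) hb
  have hC : ∀ c ∈ C, c ∈ B ⊔ C := fun c hc => (le_sup_right : C ≤ B ⊔ C) hc
  have htrace : (∀ x ∈ B ⊔ C, Etil (Etil0 x) = Etil x) →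
      ∀ b ∈ B, ∀ c ∈ C, Etil (b * c) = Etil (c * b) := by
    intro h b hb c hc
    have h1 : Etil (b * c) = Etil (b * E0 c) := by
      rw [← (hEtil0 b hb c hc).1, h _ (mul_mem (hB b hb) (hC c hc))]
    have h2 : Etil (c * b) = Etil (b * E0 c) := by
      rw [← (hEtil0 b hb c hc).2, h _ (mul_mem (hC c hc) (hB b hb))]
    rw [h1, h2]
  constructor
  · intro h
    refine ⟨htrace h, ?_⟩
    suffices hkey : ∀ x ∈ Submodule.span ℂ {z : A | ∃ b ∈ B, ∃ c ∈ C, z = b * c},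
        Etil (star x) = star (Etil x) by
      intro x hx; exact hkey x (hspan x hx)
    intro x hx'
    induction hx' using Submodule.span_induction with
    | mem z hz =>
      obtain ⟨b, hb, c, hc, rfl⟩ := hz
      have hb' : star b ∈ B := star_mem hb
      have hc' : star c ∈ C := star_mem hc
      calc Etil (star (b * c)) = Etil (star c * star b) := by rw [star_mul]
        _ = Etil (star b * star c) := (htrace h _ hb' _ hc').symm
        _ = star b * E (star c) := hEtil _ hb' _ hc'
        _ = star b * star (E c) := by rw [hEstar c hc]
        _ = star (E c * b) := by rw [star_mul]
        _ = star (b * E c) := by rw [hEcomm c hc b hb]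
        _ = star (Etil (b * c)) := by rw [hEtil b hb c hc]
    | zero => simp
    | add x y hxm hym ihx ihy => simp [star_add, map_add, ihx, ihy]
    | smul a x hxm ihx =>
      rw [star_smul, map_smul, map_smul, ihx, star_smul]
  · constructor
    · intro h c hc
      have h1 : Etil0 c = E0 c := by
        have := (hEtil0 1 (one_mem B) c hc).1
        simpa using this
      have h2 : Etil c = E c := by
        have := hEtil 1 (one_mem B) c hc
        simpa using this
      have h3 : Etil (E0 c) = E (E0 c) := by
        have := hEtil 1 (one_mem B) (E0 c) (hE0maps c hc)
        simpa using this
      have := h c (hC c hc)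
      rw [h1, h3, h2] at this
      exact this
    · intro h
      suffices hkey : ∀ x ∈ Submodule.span ℂ {z : A | ∃ b ∈ B, ∃ c ∈ C, z = b * c},
          Etil (Etil0 x) = Etil x by
        intro x hx; exact hkey x (hspan x hx)
      intro x hx'
      induction hx' using Submodule.span_induction with
      | mem z hz =>
        obtain ⟨b, hb, c, hc, rfl⟩ := hz
        rw [(hEtil0 b hb c hc).1, hEtil b hb _ (hE0maps c hc), h c hc,
          hEtil b hb c hc]
      | zero => simp
      | add x y hxm hym ihx ihy => simp [map_add, ihx, ihy]
      | smul a x hxm ihx => rw [map_smul, map_smul, ihx, map_smul]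
end
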